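/- Let $A_1,\dots,A_d$ be self-adjoint contractions on a Hilbert space $H$. Then there exists a Hilbert space $K$ of dimension $2^{d-1}\cdot\dim H$, an isometry $V : H \to K$, and commuting self-adjoint operators $T_1,\dots,T_d$ on $K$ with $\|T_i\| \leq d$ for each $i$, such that $A_i = V^* T_i V$ for $i = 1,\dots,d$. -/

import Mathlib

set_option linter.unusedSectionVars false

noncomputable section
namespace Stmt4Aux

open ContinuousLinearMap

abbrev Kd (d : ℕ) (H : Type) [NormedAddCommGroup H] [InnerProductSpace ℂ H] :=
  PiLp 2 (fun _ : Fin (d-1) → Fin 2 => H)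

variable {H : Type} [NormedAddCommGroup H] [InnerProductSpace ℂ H] [CompleteSpace H] {d : ℕ}

instance : CompleteSpace (Kd d H) := inferInstance

theorem pi_norm_le {ι : Type} [Fintype ι] (c : ℝ) (hc : 0 ≤ c)
    (x : PiLp 2 (fun _ : ι => H)) (y : PiLp 2 (fun _ : ι => H))
    (h : ∀ i, ‖x i‖ ≤ c * ‖y i‖) : ‖x‖ ≤ c * ‖y‖ := by
  rw [PiLp.norm_eq_of_L2, PiLp.norm_eq_of_L2]
  rw [← Real.sqrt_sq (by positivity : (0:ℝ) ≤ c), ← Real.sqrt_mul (by positivity)]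
  apply Real.sqrt_le_sqrt
  rw [Finset.mul_sum]
  apply Finset.sum_le_sum
  intro i _
  calc ‖x i‖ ^ 2 ≤ (c * ‖y i‖) ^ 2 := by
        apply pow_le_pow_left₀ (norm_nonneg _) (h i)
    _ = c ^ 2 * ‖y i‖ ^ 2 := by ring

def mapA (A : H →L[ℂ] H) : Kd d H →L[ℂ] Kd d H :=
  LinearMap.mkContinuous
    { toFun := fun x => (WithLp.toLp 2 (fun s => A (x s)) : Kd d H)
      map_add' := by intro x y; ext s; exact map_add A _ _
      map_smul' := by intro c x; ext s; exact map_smul A c _ }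
    ‖A‖ (fun x => pi_norm_le ‖A‖ (norm_nonneg _) _ x (fun s => A.le_opNorm (x s)))

@[simp] theorem mapA_apply (A : H →L[ℂ] H) (x : Kd d H) (s) : mapA A x s = A (x s) := rfl

theorem mapA_norm_le (A : H →L[ℂ] H) : ‖(mapA A : Kd d H →L[ℂ] Kd d H)‖ ≤ ‖A‖ :=
  LinearMap.mkContinuous_norm_le _ (norm_nonneg _) _

def Wp (e : (Fin (d-1) → Fin 2) ≃ (Fin (d-1) → Fin 2)) : Kd d H →L[ℂ] Kd d H :=
  LinearMap.mkContinuous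
    { toFun := fun x => (WithLp.toLp 2 (fun s => x (e s)) : Kd d H)
      map_add' := by intro x y; ext s; rfl
      map_smul' := by intro c x; ext s; rfl }
    1 (by
      intro x
      rw [one_mul]
      apply le_of_eq
      rw [PiLp.norm_eq_of_L2, PiLp.norm_eq_of_L2]
      congr 1
      exact Equiv.sum_comp e (fun s => ‖x s‖ ^ 2))

@[simp] theorem Wp_apply (e) (x : Kd d H) (s) : Wp e x s = x (e s) := rfl

theorem Wp_norm_le (e) : ‖(Wp e : Kd d H →L[ℂ] Kd d H)‖ ≤ 1 :=
  LinearMap.mkContinuous_norm_le _ zero_le_one _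

theorem ext_K {x y : Kd d H} (h : ∀ s, x s = y s) : x = y := PiLp.ext h

theorem mapA_comp_Wp (A : H →L[ℂ] H) (e) :
    (mapA A : Kd d H →L[ℂ] Kd d H) ∘L Wp e = Wp e ∘L mapA A := by
  refine ContinuousLinearMap.ext fun x => ext_K fun s => ?_
  rw [ContinuousLinearMap.comp_apply, ContinuousLinearMap.comp_apply, mapA_apply,
    Wp_apply, Wp_apply, mapA_apply]

theorem adjoint_mapA (A : H →L[ℂ] H) :
    adjoint (mapA A : Kd d H →L[ℂ] Kd d H) = mapA (adjoint A) := by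
  symm
  rw [eq_adjoint_iff]
  intro x y
  rw [PiLp.inner_apply, PiLp.inner_apply]
  refine Finset.sum_congr rfl fun s _ => ?_
  rw [mapA_apply, mapA_apply]
  exact A.adjoint_inner_left _ _

theorem adjoint_Wp (e) :
    adjoint (Wp e : Kd d H →L[ℂ] Kd d H) = Wp e.symm := by
  symm
  rw [eq_adjoint_iff]
  intro x y
  rw [PiLp.inner_apply, PiLp.inner_apply]
  calc ∑ s, (inner ℂ (Wp e.symm x s) (y s) : ℂ)
      = ∑ s, (inner ℂ (x (e.symm s)) (y s) : ℂ) := by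
        refine Finset.sum_congr rfl fun s _ => ?_; rw [Wp_apply]
    _ = ∑ s, (inner ℂ (x (e.symm (e s))) (y (e s)) : ℂ) :=
        (Equiv.sum_comp e fun s => (inner ℂ (x (e.symm s)) (y s) : ℂ)).symm
    _ = ∑ s, (inner ℂ (x s) (Wp e y s) : ℂ) := by
        refine Finset.sum_congr rfl fun s _ => ?_; rw [Wp_apply, Equiv.symm_apply_apply]
-- the isometry V
def Vlin : H →ₗ[ℂ] Kd d H :=
  (WithLp.linearEquiv 2 ℂ _).symm.toLinearMap ∘ₗ
    LinearMap.single ℂ (fun _ : Fin (d-1) → Fin 2 => H) 0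

@[simp] theorem Vlin_apply (h : H) (s) :
    (Vlin h : Kd d H) s = if s = 0 then h else 0 := Pi.single_apply _ _ _

theorem V_norm_aux (h : H) : ‖(Vlin h : Kd d H)‖ = ‖h‖ := by
  rw [PiLp.norm_eq_of_L2]
  have hs : ∀ s : Fin (d-1) → Fin 2,
      ‖(Vlin h : Kd d H) s‖ ^ 2 = if s = 0 then ‖h‖^2 else 0 := by
    intro s; rw [Vlin_apply]; split <;> simp
  simp_rw [hs]
  rw [Finset.sum_ite_eq' Finset.univ (0 : Fin (d-1) → Fin 2) (fun _ => ‖h‖^2)]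
  simp [Real.sqrt_sq (norm_nonneg h)]

def Vmap : H →L[ℂ] Kd d H :=
  LinearMap.mkContinuous Vlin 1 (fun h => by rw [one_mul]; exact le_of_eq (V_norm_aux h))

@[simp] theorem Vmap_apply (h : H) (s) :
    (Vmap h : Kd d H) s = if s = 0 then h else 0 := Vlin_apply h s

theorem Vmap_norm (h : H) : ‖(Vmap h : Kd d H)‖ = ‖h‖ := V_norm_aux h

theorem Vmap_isometry : Isometry (Vmap : H →L[ℂ] Kd d H) :=
  AddMonoidHomClass.isometry_of_norm _ Vmap_norm

def ev0 : Kd d H →L[ℂ] H :=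
  LinearMap.mkContinuous
    (LinearMap.proj 0 ∘ₗ (WithLp.linearEquiv 2 ℂ _).toLinearMap)
    1 (fun x => by
      have h0 : (LinearMap.proj 0 ∘ₗ (WithLp.linearEquiv 2 ℂ _).toLinearMap) x = x 0 := rfl
      rw [one_mul, h0, PiLp.norm_eq_of_L2, ← Real.sqrt_sq (norm_nonneg (x 0))]
      apply Real.sqrt_le_sqrt
      exact Finset.single_le_sum (f := fun s => ‖x s‖^2)
        (fun s _ => by positivity) (Finset.mem_univ 0))

@[simp] theorem ev0_apply (x : Kd d H) : ev0 x = x 0 := rfl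

theorem adjoint_Vmap :
    ContinuousLinearMap.adjoint (Vmap : H →L[ℂ] Kd d H) = ev0 := by
  symm
  rw [eq_adjoint_iff]
  intro x y
  rw [PiLp.inner_apply, ev0_apply]
  have hs : ∀ s : Fin (d-1) → Fin 2,
      (inner ℂ (x s) ((Vmap y : Kd d H) s) : ℂ) =
        if s = 0 then inner ℂ (x 0) y else 0 := by
    intro s
    rw [Vmap_apply]
    split
    · rename_i hh; subst hh; rfl
    · simp
  simp_rw [hs]
  rw [Finset.sum_ite_eq' Finset.univ (0 : Fin (d-1) → Fin 2) (fun _ => (inner ℂ (x 0) y : ℂ))]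
  simp
-- char 2 combinatorics
theorem add_self_eq_zero' (x : Fin (d-1) → Fin 2) : x + x = 0 := by
  funext k
  have : ∀ a : Fin 2, a + a = 0 := by decide
  exact this (x k)

def vec (i : Fin d) : Fin (d-1) → Fin 2 := fun k => if (k:ℕ)+1 = (i:ℕ) then 1 else 0

theorem vec_inj {i j : Fin d} (h : vec i = vec j) : i = j := by
  by_contra hne
  have hne' : (i:ℕ) ≠ (j:ℕ) := fun hh => hne (Fin.ext hh)
  rcases Nat.eq_zero_or_pos (j:ℕ) with hj | hj
  · rcases Nat.eq_zero_or_pos (i:ℕ) with hi | hi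
    · omega
    · have hk : (i:ℕ) - 1 < d - 1 := by have := i.isLt; omega
      have hc := congrFun h ⟨(i:ℕ)-1, hk⟩
      simp only [vec] at hc
      rw [if_pos (by omega), if_neg (by omega)] at hc
      exact absurd hc (by decide)
  · have hk : (j:ℕ) - 1 < d - 1 := by have := j.isLt; omega
    have hc := congrFun h ⟨(j:ℕ)-1, hk⟩
    simp only [vec] at hc
    rw [if_neg (by omega), if_pos (by omega)] at hc
    exact absurd hc (by decide)

theorem vec_add_vec_eq_zero_iff {i j : Fin d} : vec i + vec j = 0 ↔ i = j := by
  constructor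
  · intro h
    apply vec_inj
    have h2 := add_self_eq_zero' (d := d) (vec j)
    exact add_right_cancel (h.trans h2.symm)
  · rintro rfl; exact add_self_eq_zero' _

def fl (i : Fin d) : (Fin (d-1) → Fin 2) ≃ (Fin (d-1) → Fin 2) := Equiv.addLeft (vec i)

@[simp] theorem fl_apply (i : Fin d) (x) : fl i x = vec i + x := rfl

theorem fl_symm (i : Fin d) : (fl i).symm = fl i := by
  refine Equiv.ext fun x => ?_
  show -vec i + x = vec i + x
  rw [neg_eq_of_add_eq_zero_left (add_self_eq_zero' (vec i))]

theorem fl_trans_comm (i j : Fin d) : (fl i).trans (fl j) = (fl j).trans (fl i) := by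
  refine Equiv.ext fun x => ?_
  simp only [Equiv.trans_apply, fl_apply]
  abel

theorem fl_fl_zero (i j : Fin d) : fl i (fl j 0) = 0 ↔ i = j := by
  rw [fl_apply, fl_apply, add_zero, vec_add_vec_eq_zero_iff]
-- sum evaluation on Kd
theorem Kd_sum_apply {ι : Type*} (s : Finset ι) (f : ι → Kd d H) (t) :
    (∑ i ∈ s, f i) t = ∑ i ∈ s, f i t := by
  classical
  induction s using Finset.cons_induction with
  | empty => simp [PiLp.zero_apply]
  | cons a s ha ih => rw [Finset.sum_cons, Finset.sum_cons, PiLp.add_apply, ih]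

theorem Wp_comp_Wp (e f) : (Wp e : Kd d H →L[ℂ] Kd d H) ∘L Wp f = Wp (e.trans f) := by
  refine ContinuousLinearMap.ext fun x => ext_K fun s => ?_
  rw [ContinuousLinearMap.comp_apply, Wp_apply, Wp_apply, Wp_apply, Equiv.trans_apply]

-- the dilation operators
def T1 (A : Fin d → H →L[ℂ] H) : Kd d H →L[ℂ] Kd d H := ∑ j, mapA (A j) * Wp (fl j)

def Td (A : Fin d → H →L[ℂ] H) (i : Fin d) : Kd d H →L[ℂ] Kd d H := T1 A * Wp (fl i)

theorem commute_Wp_Wp (i j : Fin d) :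
    Commute (Wp (fl i) : Kd d H →L[ℂ] Kd d H) (Wp (fl j)) := by
  show _ = _
  rw [ContinuousLinearMap.mul_def, ContinuousLinearMap.mul_def, Wp_comp_Wp, Wp_comp_Wp,
    fl_trans_comm]

theorem commute_mapA_Wp (B : H →L[ℂ] H) (e) :
    Commute (mapA B : Kd d H →L[ℂ] Kd d H) (Wp e) := by
  show _ = _
  rw [ContinuousLinearMap.mul_def, ContinuousLinearMap.mul_def, mapA_comp_Wp]

theorem commute_T1_Wp (A : Fin d → H →L[ℂ] H) (i : Fin d) :
    Commute (T1 A) (Wp (fl i) : Kd d H →L[ℂ] Kd d H) :=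
  Commute.sum_left _ _ _ fun j _ =>
    (commute_mapA_Wp (A j) (fl i)).mul_left (commute_Wp_Wp j i)

theorem commute_Td (A : Fin d → H →L[ℂ] H) (i j : Fin d) :
    Commute (Td A i) (Td A j) :=
  ((Commute.refl (T1 A)).mul_right (commute_T1_Wp A j)).mul_left
    ((commute_T1_Wp A i).symm.mul_right (commute_Wp_Wp i j))

theorem star_term (A : Fin d → H →L[ℂ] H) (hsa : ∀ i, IsSelfAdjoint (A i)) (j : Fin d) :
    star (mapA (A j) * Wp (fl j) : Kd d H →L[ℂ] Kd d H) = mapA (A j) * Wp (fl j) := by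
  rw [star_mul, ContinuousLinearMap.star_eq_adjoint, ContinuousLinearMap.star_eq_adjoint,
    adjoint_Wp, fl_symm, adjoint_mapA]
  rw [← ContinuousLinearMap.star_eq_adjoint, (hsa j).star_eq]
  exact ((commute_mapA_Wp (A j) (fl j)).eq).symm

theorem sa_T1 (A : Fin d → H →L[ℂ] H) (hsa : ∀ i, IsSelfAdjoint (A i)) :
    IsSelfAdjoint (T1 A) := by
  show star _ = _
  have hst := star_sum (R := Kd d H →L[ℂ] Kd d H) Finset.univ (fun j => mapA (A j) * Wp (fl j))
  rw [T1, hst]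
  exact Finset.sum_congr rfl fun j _ => star_term A hsa j

theorem sa_Td (A : Fin d → H →L[ℂ] H) (hsa : ∀ i, IsSelfAdjoint (A i)) (i : Fin d) :
    IsSelfAdjoint (Td A i) := by
  show star _ = _
  rw [Td, star_mul, sa_T1 A hsa, ContinuousLinearMap.star_eq_adjoint, adjoint_Wp, fl_symm]
  exact (commute_T1_Wp A i).eq.symm

theorem norm_T1_le (A : Fin d → H →L[ℂ] H) (hc : ∀ i, ‖A i‖ ≤ 1) : ‖T1 A‖ ≤ (d : ℝ) := by
  refine (norm_sum_le _ _).trans ?_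
  calc ∑ j, ‖(mapA (A j) * Wp (fl j) : Kd d H →L[ℂ] Kd d H)‖
      ≤ ∑ _j : Fin d, (1:ℝ) := by
        refine Finset.sum_le_sum fun j _ => ?_
        refine (norm_mul_le _ _).trans ?_
        have h1 : ‖(mapA (A j) : Kd d H →L[ℂ] Kd d H)‖ ≤ 1 :=
          (mapA_norm_le (A j)).trans (hc j)
        have h2 := Wp_norm_le (d := d) (H := H) (fl j)
        calc ‖(mapA (A j) : Kd d H →L[ℂ] Kd d H)‖ * ‖(Wp (fl j) : Kd d H →L[ℂ] Kd d H)‖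
            ≤ 1 * 1 := mul_le_mul h1 h2 (norm_nonneg _) zero_le_one
          _ = 1 := one_mul 1
    _ = (d : ℝ) := by simp

theorem norm_Td_le (A : Fin d → H →L[ℂ] H) (hc : ∀ i, ‖A i‖ ≤ 1) (i : Fin d) :
    ‖Td A i‖ ≤ (d : ℝ) := by
  refine (norm_mul_le _ _).trans ?_
  calc ‖T1 A‖ * ‖(Wp (fl i) : Kd d H →L[ℂ] Kd d H)‖
      ≤ (d : ℝ) * 1 :=
        mul_le_mul (norm_T1_le A hc) (Wp_norm_le _) (norm_nonneg _) (by positivity)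
    _ = (d : ℝ) := mul_one _

theorem compression (A : Fin d → H →L[ℂ] H) (i : Fin d) :
    A i = (ContinuousLinearMap.adjoint (Vmap : H →L[ℂ] Kd d H)) ∘L (Td A i) ∘L Vmap := by
  refine ContinuousLinearMap.ext fun h => ?_
  rw [ContinuousLinearMap.comp_apply, ContinuousLinearMap.comp_apply, adjoint_Vmap, ev0_apply]
  rw [Td, ContinuousLinearMap.mul_apply, T1, ContinuousLinearMap.sum_apply, Kd_sum_apply]
  have hterm : ∀ j : Fin d,
      (mapA (A j) * Wp (fl j) : Kd d H →L[ℂ] Kd d H) (Wp (fl i) (Vmap h)) 0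
        = A j (if i = j then h else 0) := by
    intro j
    rw [ContinuousLinearMap.mul_apply, mapA_apply, Wp_apply, Wp_apply, Vmap_apply]
    congr 1
    by_cases hij : i = j
    · rw [if_pos ((fl_fl_zero i j).mpr hij), if_pos hij]
    · rw [if_neg (fun hh => hij ((fl_fl_zero i j).mp hh)), if_neg hij]
  simp_rw [hterm]
  rw [Finset.sum_eq_single i]
  · rw [if_pos rfl]
  · intro j _ hj
    rw [if_neg (fun hh => hj hh.symm), map_zero]
  · intro hh
    exact absurd (Finset.mem_univ i) hh

theorem rank_Kd : Module.rank ℂ (Kd d H) = (2 : Cardinal) ^ (d - 1) * Module.rank ℂ H := by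
  rw [(WithLp.linearEquiv 2 ℂ (∀ _ : Fin (d-1) → Fin 2, H)).rank_eq, rank_fun]
  congr 1
  rw [Fintype.card_fun, Fintype.card_fin, Fintype.card_fin]
  push_cast
  norm_num

end Stmt4Aux

/-- Every `d`-tuple of self-adjoint contractions on a Hilbert space `H` dilates to a
commuting `d`-tuple of self-adjoint operators of norm at most `d` on a Hilbert space `K`
of dimension `2^(d-1) · dim H`. -/
theorem stmt_4 (d : ℕ) {H : Type} [NormedAddCommGroup H] [InnerProductSpace ℂ H]
    [CompleteSpace H] (A : Fin d → H →L[ℂ] H)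
    (hsa : ∀ i, IsSelfAdjoint (A i)) (hc : ∀ i, ‖A i‖ ≤ 1) :
    ∃ (K : Type) (_ : NormedAddCommGroup K) (_ : InnerProductSpace ℂ K)
      (_ : CompleteSpace K) (V : H →L[ℂ] K) (T : Fin d → K →L[ℂ] K),
      Module.rank ℂ K = (2 : Cardinal) ^ (d - 1) * Module.rank ℂ H ∧
      Isometry V ∧
      (∀ i j, Commute (T i) (T j)) ∧
      (∀ i, IsSelfAdjoint (T i)) ∧
      (∀ i, ‖T i‖ ≤ (d : ℝ)) ∧
      (∀ i, A i = (ContinuousLinearMap.adjoint V) ∘L (T i) ∘L V) :=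
  ⟨Stmt4Aux.Kd d H, inferInstance, inferInstance, inferInstance, Stmt4Aux.Vmap,
    fun i => Stmt4Aux.Td A i, Stmt4Aux.rank_Kd, Stmt4Aux.Vmap_isometry,
    fun i j => Stmt4Aux.commute_Td A i j, fun i => Stmt4Aux.sa_Td A hsa i,
    fun i => Stmt4Aux.norm_Td_le A hc i, fun i => Stmt4Aux.compression A i⟩
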